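/- If c : 𝕋 → [0,1] is any function and ε > 0, then there exist r ∈ [0,1] and an increasing sequence μ_i (i ∈ ℕ) of elements of 𝔸 such that |c(μ_i) − r| < ε for all i and |c(μ_iˆμ_j) − r| < ε for all i < j. -/

import Mathlib

open scoped Classical

/-- The free binary system (free magma) on one generator. -/
abbrev 𝕋 : Type := FreeMagma Unit

/-- The generator `1` of `𝕋`. -/
def e1 : 𝕋 := FreeMagma.of ()

/-- `#(t)`: the number of occurrences of the generator in `t`. -/
def cnt : 𝕋 → ℕ
  | FreeMagma.of _ => 1
  | FreeMagma.mul a b => cnt a + cnt b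

/-- The space `ℓ^∞(S)` of bounded real-valued functions on `S`. -/
def Bdd (S : Type*) : Type _ := {f : S → ℝ // ∃ M, ∀ s, |f s| ≤ M}

/-- Package a function as an element of `Bdd S` (junk value if unbounded). -/
noncomputable def liftBdd {S : Type*} (g : S → ℝ) : Bdd S :=
  if h : ∃ M, ∀ s, |g s| ≤ M then ⟨g, h⟩ else ⟨fun _ => 0, 0, fun _ => by simp⟩

/-- The constant function as an element of `Bdd S`. -/
def constB (S : Type*) (c : ℝ) : Bdd S := ⟨fun _ => c, |c|, fun _ => le_rfl⟩

/-- The characteristic function of `E` as an element of `Bdd S`. -/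
noncomputable def indB {S : Type*} (E : Set S) : Bdd S :=
  liftBdd (fun s => if s ∈ E then 1 else 0)

/-- `Pr S`: finitely additive probability measures on `S`, identified with the
positive normalized linear functionals on `ℓ^∞(S)`.  The weak* topology is the
subspace topology inherited from the product topology on `Bdd S → ℝ`. -/
def PrSet (S : Type*) : Set (Bdd S → ℝ) :=
  {φ | (∀ f g h : Bdd S, (∀ s, h.1 s = f.1 s + g.1 s) → φ h = φ f + φ g) ∧
       (∀ (c : ℝ) (f g : Bdd S), (∀ s, g.1 s = c * f.1 s) → φ g = c * φ f) ∧
       (∀ f : Bdd S, (∀ s, 0 ≤ f.1 s) → 0 ≤ φ f) ∧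
       φ (constB S 1) = 1}

/-- `μ(E)`: the measure of a set `E ⊆ S`. -/
noncomputable def mE {S : Type*} (φ : Bdd S → ℝ) (E : Set S) : ℝ := φ (indB E)

/-- The product `μ ⊗ ν` of finitely additive measures:
`μ⊗ν(f) = μ(x ↦ ν(y ↦ f(x,y)))`. -/
noncomputable def prodM {S T : Type*} (φ : Bdd S → ℝ) (ψ : Bdd T → ℝ) :
    Bdd (S × T) → ℝ :=
  fun f => φ (liftBdd fun x => ψ (liftBdd fun y => f.1 (x, y)))

/-- The extension of a binary operation `op` on `S` to `Pr S`:
`μ⋆ν(f) = μ(x ↦ ν(y ↦ f(x ⋆ y)))`. -/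
noncomputable def starM {S : Type*} (op : S → S → S) (φ ψ : Bdd S → ℝ) :
    Bdd S → ℝ :=
  fun f => φ (liftBdd fun x => ψ (liftBdd fun y => f.1 (op x y)))

/-- The extension of `ˆ` to `Pr 𝕋`. -/
noncomputable def hmul (φ ψ : Bdd 𝕋 → ℝ) : Bdd 𝕋 → ℝ := starM (· * ·) φ ψ

/-- Finitely supported probability measures: finite convex combinations of
point evaluations. -/
def FinSuppPr (S : Type*) : Set (Bdd S → ℝ) :=
  {φ | ∃ (F : Finset S) (w : S → ℝ), (∀ s ∈ F, 0 ≤ w s) ∧ (∑ s ∈ F, w s) = 1 ∧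
      ∀ f : Bdd S, φ f = ∑ s ∈ F, w s * f.1 s}

/-- `𝔸_n`: finitely supported probability measures concentrated on `𝕋_n`. -/
def Asets (n : ℕ) : Set (Bdd 𝕋 → ℝ) :=
  {φ | ∃ (F : Finset 𝕋) (w : 𝕋 → ℝ), (∀ t ∈ F, cnt t = n) ∧ (∀ t ∈ F, 0 ≤ w t) ∧
      (∑ t ∈ F, w t) = 1 ∧ ∀ f : Bdd 𝕋, φ f = ∑ t ∈ F, w t * f.1 t}

/-- The extension of `+` on `ℕ` to ultrafilters: `A ∈ U+V` iff
`{m : {n : m+n ∈ A} ∈ V} ∈ U`. -/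
noncomputable def addU (U V : Ultrafilter ℕ) : Ultrafilter ℕ :=
  U.bind fun m => V.map fun n => m + n

/-- `𝔸_U`: the `U`-limit of the sets `𝔸_m`. -/
def AU (U : Ultrafilter ℕ) : Set (Bdd 𝕋 → ℝ) :=
  {μ | μ ∈ PrSet 𝕋 ∧ ∀ W : Set (Bdd 𝕋 → ℝ), IsOpen W → μ ∈ W →
      {m : ℕ | (W ∩ Asets m).Nonempty} ∈ U}

/-- The extension of `ˆ` to ultrafilters on `𝕋`: `E ∈ UˆV` iff
`{u : {v : uˆv ∈ E} ∈ V} ∈ U`. -/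
noncomputable def umul (U V : Ultrafilter 𝕋) : Ultrafilter 𝕋 :=
  U.bind fun u => V.map fun v => u * v

/-- Substitution of measures into a term `t`:
`t(μ_0,…,μ_{m-1})(f)` is the nested integral
`μ_0(x_0 ↦ ⋯ μ_{m-1}(x_{m-1} ↦ f(t(x⃗)))⋯)`. -/
noncomputable def substM : 𝕋 → List (Bdd 𝕋 → ℝ) → (Bdd 𝕋 → ℝ)
  | FreeMagma.of _, μs => μs.headI
  | FreeMagma.mul a b, μs =>
      hmul (substM a (μs.take (cnt a))) (substM b (μs.drop (cnt a)))

/-- `t_k`: iteratively remove the carets of `t` involving only leaves of index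
greater than `k`. -/
def tk : 𝕋 → ℕ → 𝕋
  | FreeMagma.of _, _ => e1
  | FreeMagma.mul a b, k => if k < cnt a then tk a k * e1 else a * tk b (k - cnt a)

/-- `l_k(t) = #(t_k) - 2` (truncated subtraction). -/
def lk (t : 𝕋) (k : ℕ) : ℕ := cnt (tk t k) - 2

/-- The subterm `t/σ` of `t` at address `σ` (`false` = left/`0`, `true` = right/`1`). -/
def subT : 𝕋 → List Bool → Option 𝕋
  | t, [] => some t
  | FreeMagma.of _, _ :: _ => none
  | FreeMagma.mul a b, c :: σ => if c then subT b σ else subT a σ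

/-- `σ <_lex ς` for incompatible binary sequences: at the first coordinate where
they differ, `σ` has `0` and `ς` has `1`. -/
def lexLT (σ ς : List Bool) : Prop :=
  ∃ p σ' ς', σ = p ++ (false :: σ') ∧ ς = p ++ (true :: ς')

/-- `x₀·E`. -/
def x0E (E : Set 𝕋) : Set 𝕋 :=
  {x | ∃ a b c : 𝕋, x = a * (b * c) ∧ (a * b) * c ∈ E}

/-- `x₁·E`. -/
def x1E (E : Set 𝕋) : Set 𝕋 :=
  {x | ∃ s a b c : 𝕋, x = s * (a * (b * c)) ∧ s * ((a * b) * c) ∈ E}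

/-- `u_σ` for a nonempty finite binary sequence `σ`. -/
def uSeq : List Bool → 𝕋
  | [] => e1
  | [_] => e1
  | b :: σ => if b then e1 * uSeq σ else uSeq σ * e1

/-- `a ≪ b`: for some `p`, `#(a) < 2^p` and `2^p` divides `#(b)`. -/
def ll (a b : 𝕋) : Prop := ∃ p : ℕ, cnt a < 2 ^ p ∧ 2 ^ p ∣ cnt b

/-- `r↾n`: the first `n` values of `r` as a finite binary sequence. -/
def rList (r : ℕ → Bool) (n : ℕ) : List Bool := (List.range n).map r

/-- The map `h_r : 𝕋 → 𝕋`. -/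
noncomputable def hr (r : ℕ → Bool) : 𝕋 → 𝕋
  | FreeMagma.of _ => uSeq (rList r 1)
  | FreeMagma.mul a b =>
      if ll a b then hr r a * hr r b else uSeq (rList r (cnt a + cnt b))

/-- The action of `h_r` on measures: `h_r(μ)(f) = μ(f ∘ h_r)`. -/
noncomputable def hrM (r : ℕ → Bool) (φ : Bdd 𝕋 → ℝ) : Bdd 𝕋 → ℝ :=
  fun f => φ (liftBdd fun t => f.1 (hr r t))

/-- `lev`: `l(1) = 0`, `l(aˆb) = l(a) + 1`. -/
def lev : 𝕋 → ℕ
  | FreeMagma.of _ => 0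
  | FreeMagma.mul a _ => lev a + 1

/-- `C` is closed under `ˆ`. -/
def HClosed (C : Set (Bdd 𝕋 → ℝ)) : Prop := ∀ μ ∈ C, ∀ ν ∈ C, hmul μ ν ∈ C
namespace HFP

open Filter

attribute [local instance] Ultrafilter.add Ultrafilter.addSemigroup

noncomputable def ulim (U : Ultrafilter ℕ) (h : ℕ → ℝ) : ℝ :=
  sInf {q | {n | h n ≤ q} ∈ U}

variable {U : Ultrafilter ℕ}

lemma ulim_nonempty_bdd {h : ℕ → ℝ} (hb : ∀ n, h n ∈ Set.Icc (0:ℝ) 1) :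
    ((1:ℝ) ∈ {q | {n | h n ≤ q} ∈ U}) ∧ BddBelow {q | {n | h n ≤ q} ∈ U} := by
  constructor
  · have : {n | h n ≤ (1:ℝ)} = Set.univ := Set.eq_univ_of_forall (fun n => (hb n).2)
    simp only [Set.mem_setOf_eq, this]
    exact Filter.univ_mem
  · refine ⟨0, fun q hq => ?_⟩
    obtain ⟨n, hn⟩ := Ultrafilter.nonempty_of_mem hq
    exact le_trans (hb n).1 hn

lemma ulim_mem_Icc {h : ℕ → ℝ} (hb : ∀ n, h n ∈ Set.Icc (0:ℝ) 1) :
    ulim U h ∈ Set.Icc (0:ℝ) 1 := by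
  obtain ⟨h1, hbdd⟩ := ulim_nonempty_bdd (U := U) hb
  constructor
  · exact le_csInf ⟨1, h1⟩ (fun q hq => by
      obtain ⟨n, hn⟩ := Ultrafilter.nonempty_of_mem hq
      exact le_trans (hb n).1 hn)
  · exact csInf_le hbdd h1

lemma ulim_spec {h : ℕ → ℝ} (hb : ∀ n, h n ∈ Set.Icc (0:ℝ) 1) {δ : ℝ} (hδ : 0 < δ) :
    {n | |h n - ulim U h| < δ} ∈ U := by
  obtain ⟨h1, hbdd⟩ := ulim_nonempty_bdd (U := U) hb
  set s : Set ℝ := {q | {n | h n ≤ q} ∈ U} with hs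
  set x : ℝ := ulim U h with hx
  have hup : {n | h n < x + δ} ∈ U := by
    obtain ⟨q, hq, hq'⟩ := Real.lt_sInf_add_pos ⟨1, h1⟩ hδ
    refine Filter.mem_of_superset hq (fun n hn => ?_)
    exact lt_of_le_of_lt hn hq'
  have hlo : {n | x - δ < h n} ∈ U := by
    by_contra hcon
    have : {n | h n ≤ x - δ} ∈ U := by
      have := (Ultrafilter.compl_mem_iff_notMem (s := {n | x - δ < h n})).mpr hcon
      refine Filter.mem_of_superset this (fun n hn => ?_)
      simpa using hn
    have hmem : (x - δ) ∈ s := this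
    have : x ≤ x - δ := csInf_le hbdd hmem
    linarith
  refine Filter.mem_of_superset (Filter.inter_mem hup hlo) (fun n hn => ?_)
  obtain ⟨hn1, hn2⟩ := hn
  simp only [Set.mem_setOf_eq] at hn1 hn2 ⊢
  rw [abs_sub_lt_iff]
  constructor <;> linarith

lemma abs_ulim_sub_le {h : ℕ → ℝ} (hb : ∀ n, h n ∈ Set.Icc (0:ℝ) 1) {x η : ℝ}
    (hU : {n | |h n - x| ≤ η} ∈ U) : |ulim U h - x| ≤ η := by
  refine le_of_forall_pos_le_add (fun δ hδ => ?_)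
  obtain ⟨n, hn1, hn2⟩ := Ultrafilter.nonempty_of_mem (Filter.inter_mem hU (ulim_spec hb hδ))
  simp only [Set.mem_setOf_eq] at hn1 hn2
  have h3 : |ulim U h - h n| < δ := by rw [abs_sub_comm]; exact hn2
  have h4 := abs_sub_le (ulim U h) (h n) x
  linarith

lemma ulim_add_add (idem : ∀ A ∈ U, {n | {m | n + m ∈ A} ∈ U} ∈ U)
    {g : ℕ → ℝ} (hb : ∀ n, g n ∈ Set.Icc (0:ℝ) 1) :
    ulim U (fun n => ulim U (fun m => g (n + m))) = ulim U g := by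
  set x := ulim U g with hx
  set y : ℕ → ℝ := fun n => ulim U (fun m => g (n + m)) with hy
  have hyb : ∀ n, y n ∈ Set.Icc (0:ℝ) 1 := fun n => ulim_mem_Icc (fun m => hb (n + m))
  have key : ∀ δ : ℝ, 0 < δ → |ulim U y - x| ≤ 2 * δ := by
    intro δ hδ
    have hA : {s | |g s - x| < δ} ∈ U := ulim_spec hb hδ
    have hB := idem _ hA
    have hsub : {n | {m | n + m ∈ {s | |g s - x| < δ}} ∈ U} ⊆ {n | |y n - x| ≤ δ} := by
      intro n hn
      simp only [Set.mem_setOf_eq] at hn ⊢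
      refine abs_ulim_sub_le (fun m => hb (n + m)) ?_
      refine Filter.mem_of_superset hn (fun m hm => ?_)
      simp only [Set.mem_setOf_eq] at hm ⊢
      exact le_of_lt hm
    have : {n | |y n - x| ≤ δ} ∈ U := Filter.mem_of_superset hB hsub
    calc |ulim U y - x| ≤ δ := abs_ulim_sub_le hyb this
      _ ≤ 2 * δ := by linarith
  have : |ulim U y - x| ≤ 0 := by
    refine le_of_forall_pos_le_add (fun δ hδ => ?_)
    have := key (δ/2) (by linarith)
    linarith
  exact sub_eq_zero.mp (abs_eq_zero.mp (le_antisymm this (abs_nonneg _)))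

lemma exists_good_ultrafilter : ∃ U : Ultrafilter ℕ,
    (∀ A ∈ U, {n | {m | n + m ∈ A} ∈ U} ∈ U) ∧ (U : Filter ℕ) ≤ cofinite := by
  obtain ⟨U, hidem, hFS⟩ :=
    Hindman.exists_idempotent_ultrafilter_le_FS (M := ℕ) (fun n => n + 1)
  have hpos : ∀ (a : Stream' ℕ) m, m ∈ Hindman.FS a → (∀ i, 0 < a.get i) → 0 < m := by
    intro a m hm
    induction hm with
    | head' a => exact fun ha => ha 0
    | tail' a m h ih => exact fun ha => ih (fun i => ha (i+1))
    | cons' a m h ih => exact fun ha => Nat.add_pos_left (ha 0) m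
  refine ⟨U, ?_, ?_⟩
  · intro A hA
    have hA2 : A ∈ U + U := by rw [hidem]; exact hA
    have := (Ultrafilter.eventually_add U U (fun m => m ∈ A)).mp hA2
    exact this
  · rcases U.le_cofinite_or_eq_pure with h | ⟨a, rfl⟩
    · exact h
    · exfalso
      have ha0 : a ∈ Hindman.FS (fun n => n + 1 : Stream' ℕ) := by
        simpa using hFS
      have haa : a + a = a := by
        have h1 : (∀ᶠ m in ↑(pure a + pure a : Ultrafilter ℕ), m = a) ↔ (a + a = a) := by
          rw [Ultrafilter.eventually_add]
          simp
        have h2 : (∀ᶠ m in ↑(pure a : Ultrafilter ℕ), m = a) := by simp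
        exact h1.mp (by rw [hidem]; exact h2)
      have : a = 0 := by omega
      subst this
      have := hpos _ _ ha0 (fun i => Nat.succ_pos _)
      omega

open Set

variable {U : Ultrafilter ℕ}

noncomputable def ulimN (U : Ultrafilter ℕ) : ℕ → (List ℕ → ℝ) → ℝ
  | 0, F => F []
  | (A+1), F => ulim U (fun n => ulimN U A (fun l => F (n :: l)))

lemma ulimN_mem_Icc : ∀ (A : ℕ) (F : List ℕ → ℝ), (∀ l, F l ∈ Icc (0:ℝ) 1) →
    ulimN U A F ∈ Icc (0:ℝ) 1 := by
  intro A
  induction A with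
  | zero => intro F hF; exact hF []
  | succ A ih =>
    intro F hF
    exact ulim_mem_Icc (fun n => ih _ (fun l => hF (n :: l)))

lemma ulimN_congr : ∀ (A : ℕ) (F G : List ℕ → ℝ), (∀ l, l.length = A → F l = G l) →
    ulimN U A F = ulimN U A G := by
  intro A
  induction A with
  | zero => intro F G h; exact h [] rfl
  | succ A ih =>
    intro F G h
    show ulim U _ = ulim U _
    congr 1
    funext n
    exact ih _ _ (fun l hl => h (n :: l) (by simp [hl]))

lemma ulim_const {r : ℝ} (hr : r ∈ Icc (0:ℝ) 1) : ulim U (fun _ => r) = r := by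
  have : |ulim U (fun _ : ℕ => r) - r| ≤ 0 :=
    abs_ulim_sub_le (fun _ => hr) (by simp; exact Filter.univ_mem)
  have := abs_eq_zero.mp (le_antisymm this (abs_nonneg _))
  linarith [sub_eq_zero.mp this]

lemma ulimN_const : ∀ (A : ℕ) {r : ℝ}, r ∈ Icc (0:ℝ) 1 → ulimN U A (fun _ => r) = r := by
  intro A
  induction A with
  | zero => intro r _; rfl
  | succ A ih =>
    intro r hr
    show ulim U (fun n => ulimN U A (fun _ => r)) = r
    have : (fun _ : ℕ => ulimN U A (fun _ => r)) = (fun _ : ℕ => r) := by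
      funext n; exact ih hr
    rw [this]
    exact ulim_const hr

lemma ulimN_pad : ∀ (A B : ℕ) (F : List ℕ → ℝ), (∀ l, F l ∈ Icc (0:ℝ) 1) →
    ulimN U (A + B) (fun l => F (l.take A)) = ulimN U A F := by
  intro A
  induction A with
  | zero =>
    intro B F hF
    simp only [List.take_zero, Nat.zero_add]
    exact ulimN_const B (hF [])
  | succ A ih =>
    intro B F hF
    have harith : A + 1 + B = (A + B) + 1 := by omega
    rw [harith]
    show ulim U _ = ulim U _
    congr 1
    funext n
    have : (fun l => F ((n :: l).take (A+1))) = (fun l : List ℕ => F (n :: l.take A)) := by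
      funext l; simp
    rw [show (fun l => F ((n :: l).take (A+1))) = (fun l : List ℕ => F (n :: l.take A)) from this]
    exact ih B (fun l => F (n :: l)) (fun l => hF (n :: l))

lemma ulimN_succ (A : ℕ) (F : List ℕ → ℝ) :
    ulimN U (A + 1) F = ulim U (fun n => ulimN U A (fun l => F (n :: l))) := rfl

def ps : List ℕ → List ℕ
  | a :: b :: l => (a + b) :: ps l
  | _ => []

lemma ps_nil : ps [] = [] := rfl

lemma E1 (idem : ∀ A ∈ U, {n | {m | n + m ∈ A} ∈ U} ∈ U) :
    ∀ (A : ℕ) (F : List ℕ → ℝ), (∀ l, F l ∈ Icc (0:ℝ) 1) →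
    ulimN U (2 * A) (fun l => F (ps l)) = ulimN U A F := by
  intro A
  induction A with
  | zero => intro F hF; rfl
  | succ A ih =>
    intro F hF
    have harith : 2 * (A + 1) = (2 * A) + 1 + 1 := by omega
    rw [harith]
    simp only [ulimN_succ]
    have step1 : ∀ n m : ℕ,
        ulimN U (2*A) (fun l => F (ps (n :: m :: l))) = ulimN U A (fun l => F ((n + m) :: l)) := by
      intro n m
      have : (fun l => F (ps (n :: m :: l))) = (fun l => (fun l' => F ((n+m) :: l')) (ps l)) := by
        funext l; rfl
      rw [this]
      exact ih (fun l' => F ((n+m) :: l')) (fun l' => hF _)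
    have : (fun n => ulim U (fun m => ulimN U (2*A) (fun l => F (ps (n :: m :: l)))))
        = (fun n => ulim U (fun m => ulimN U A (fun l => F ((n + m) :: l)))) := by
      funext n; congr 1; funext m; exact step1 n m
    rw [this]
    exact ulim_add_add idem (g := fun s => ulimN U A (fun l => F (s :: l)))
      (fun s => ulimN_mem_Icc A _ (fun l => hF _))

lemma ps_append : ∀ (l₁ l₂ : List ℕ), Even l₁.length → ps (l₁ ++ l₂) = ps l₁ ++ ps l₂
  | [], l₂, _ => rfl
  | [a], l₂, h => by simp at h
  | (a :: b :: t), l₂, h => by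
    have ht : Even t.length := by
      simp only [List.length_cons] at h
      rcases h with ⟨c, hc⟩
      exact ⟨c - 1, by omega⟩
    show (a + b) :: ps (t ++ l₂) = (a + b) :: (ps t ++ ps l₂)
    rw [ps_append t l₂ ht]

lemma ps_length : ∀ (l : List ℕ), (ps l).length = l.length / 2
  | [] => rfl
  | [a] => by simp [ps]
  | (a :: b :: t) => by
    show (ps t).length + 1 = (a :: b :: t).length / 2
    rw [ps_length t]
    simp only [List.length_cons]
    omega

lemma ps_sum : ∀ (l : List ℕ), Even l.length → (ps l).sum = l.sum
  | [], _ => rfl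
  | [a], h => by simp at h
  | (a :: b :: t), h => by
    have ht : Even t.length := by
      simp only [List.length_cons] at h
      rcases h with ⟨c, hc⟩
      exact ⟨c - 1, by omega⟩
    show (a + b) + (ps t).sum = a + (b + t.sum)
    rw [ps_sum t ht]; omega

lemma ps_mem : ∀ (l : List ℕ), (∀ x ∈ l, 1 ≤ x) → ∀ y ∈ ps l, 1 ≤ y
  | [], _, y, hy => by simp [ps_nil] at hy
  | [a], _, y, hy => by simp [ps] at hy
  | (a :: b :: t), h, y, hy => by
    rcases List.mem_cons.mp hy with hy | hy
    · have := h a (by simp)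
      subst hy
      omega
    · exact ps_mem t (fun x hx => h x (by simp [hx])) y hy


/-! ### Trees -/

def Lc : ℕ → 𝕋
  | 0 => e1
  | 1 => e1
  | (n+2) => Lc (n+1) * e1

lemma cnt_e1 : cnt e1 = 1 := rfl

lemma cnt_mul (a b : 𝕋) : cnt (a * b) = cnt a + cnt b := rfl

lemma cnt_Lc : ∀ n : ℕ, 1 ≤ n → cnt (Lc n) = n := by
  intro n
  induction n with
  | zero => intro h; omega
  | succ n ih =>
    intro _
    match n, ih with
    | 0, _ => rfl
    | (m+1), ih =>
      show cnt (Lc (m+1) * e1) = m + 2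
      rw [cnt_mul, ih (by omega), cnt_e1]

def bal : ℕ → List ℕ → 𝕋
  | 0, l => Lc l.headI
  | (k+1), l => bal k (l.take (2^k)) * bal k (l.drop (2^k))

lemma cnt_bal : ∀ (k : ℕ) (l : List ℕ), l.length = 2^k → (∀ x ∈ l, 1 ≤ x) →
    cnt (bal k l) = l.sum := by
  intro k
  induction k with
  | zero =>
    intro l hl hx
    obtain ⟨a, rfl⟩ := List.length_eq_one_iff.mp hl
    show cnt (Lc a) = a + 0
    rw [cnt_Lc a (hx a (by simp))]; omega
  | succ k ih =>
    intro l hl hx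
    have h2 : (2:ℕ)^(k+1) = 2^k + 2^k := by ring
    have hlt : (l.take (2^k)).length = 2^k := by
      rw [List.length_take, hl, h2]; omega
    have hld : (l.drop (2^k)).length = 2^k := by
      rw [List.length_drop, hl, h2]; omega
    show cnt (bal k (l.take (2^k)) * bal k (l.drop (2^k))) = l.sum
    rw [cnt_mul, ih _ hlt (fun x hx' => hx x (List.take_subset _ _ hx')),
      ih _ hld (fun x hx' => hx x (List.drop_subset _ _ hx'))]
    conv_rhs => rw [← List.take_append_drop (2^k) l]
    rw [List.sum_append]

lemma bal_succ (k : ℕ) (l : List ℕ) :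
    bal (k+1) l = bal k (l.take (2^k)) * bal k (l.drop (2^k)) := rfl

/-! ### The kernel extraction -/

section Kernel

variable (U : Ultrafilter ℕ) (A : ℕ) (G : Fin 6 → List ℕ → ℝ) (η : ℝ)

noncomputable def PL (m : Fin 6) (l : List ℕ) : ℝ :=
  ulimN U (2 * A - l.length) (fun l' => G m (l ++ l'))

variable {U A G η}

lemma PL_nil (m : Fin 6) : PL U A G m [] = ulimN U (2 * A) (G m) := by
  unfold PL
  simp

lemma PL_full (m : Fin 6) {l : List ℕ} (h : l.length = 2 * A) : PL U A G m l = G m l := by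
  unfold PL
  rw [h, Nat.sub_self]
  show G m (l ++ []) = G m l
  rw [List.append_nil]

lemma PL_mem_Icc (hG : ∀ m l, G m l ∈ Set.Icc (0:ℝ) 1) (m : Fin 6) (l : List ℕ) :
    PL U A G m l ∈ Set.Icc (0:ℝ) 1 :=
  ulimN_mem_Icc _ _ (fun l' => hG m (l ++ l'))

lemma PL_step (hG : ∀ m l, G m l ∈ Set.Icc (0:ℝ) 1) (hη : 0 < η) (m : Fin 6)
    {l : List ℕ} (h : l.length < 2 * A) :
    {n | |PL U A G m (l ++ [n]) - PL U A G m l| < η} ∈ U := by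
  have harith : 2 * A - l.length = (2 * A - (l.length + 1)) + 1 := by omega
  have hPL : PL U A G m l
      = ulim U (fun n => ulimN U (2 * A - (l.length + 1)) (fun l' => G m (l ++ n :: l'))) := by
    unfold PL
    rw [harith, ulimN_succ]
  have hPL2 : ∀ n, PL U A G m (l ++ [n])
      = ulimN U (2 * A - (l.length + 1)) (fun l' => G m (l ++ n :: l')) := by
    intro n
    unfold PL
    have hlen : (l ++ [n]).length = l.length + 1 := by simp
    rw [hlen]
    congr 1
    funext l'
    rw [List.append_assoc, List.singleton_append]
  have := ulim_spec (U := U)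
    (h := fun n => ulimN U (2 * A - (l.length + 1)) (fun l' => G m (l ++ n :: l')))
    (fun n => ulimN_mem_Icc _ _ (fun l' => hG m _)) hη
  rw [hPL]
  refine Filter.mem_of_superset this (fun n hn => ?_)
  simp only [Set.mem_setOf_eq] at hn ⊢
  rw [hPL2 n]
  exact hn

lemma le_foldr_max : ∀ (l : List ℕ) (x : ℕ), x ∈ l → x ≤ l.foldr max 0 := by
  intro l
  induction l with
  | nil => intro x hx; simp at hx
  | cons a t ih =>
    intro x hx
    rcases List.mem_cons.mp hx with rfl | hx
    · exact le_max_left _ _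
    · exact le_trans (ih x hx) (le_max_right _ _)

lemma block_ext (hG : ∀ m l, G m l ∈ Set.Icc (0:ℝ) 1) (hη : 0 < η) (hA : 1 ≤ A)
    (hcof : (U : Filter ℕ) ≤ Filter.cofinite)
    (prev : List (List ℕ)) (hprev : ∀ p ∈ prev, p.length = A) (N : ℕ) :
    ∀ s : ℕ, s ≤ A → ∃ nb : List ℕ, nb.length = s ∧ (∀ x ∈ nb, N ≤ x) ∧
      (∀ m : Fin 6, |PL U A G m nb - PL U A G m []| ≤ s * η) ∧
      (∀ m : Fin 6, ∀ p ∈ prev, |PL U A G m (p ++ nb) - PL U A G m p| ≤ s * η) := by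
  intro s
  induction s with
  | zero =>
    intro _
    exact ⟨[], rfl, by simp, fun m => by simp, fun m p hp => by simp⟩
  | succ s ih =>
    intro hs
    obtain ⟨nb, hlen, hN, h1, h2⟩ := ih (by omega)
    have hlnb : nb.length < 2 * A := by omega
    have hlp : ∀ p ∈ prev, (p ++ nb).length < 2 * A := by
      intro p hp
      rw [List.length_append, hprev p hp, hlen]
      omega
    have hS : (⋂ m : Fin 6, {n | |PL U A G m (nb ++ [n]) - PL U A G m nb| < η}) ∈ U :=
      (Filter.iInter_mem).mpr (fun m => PL_step hG hη m hlnb)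
    have hT : (⋂ p ∈ prev.toFinset, ⋂ m : Fin 6,
        {n | |PL U A G m ((p ++ nb) ++ [n]) - PL U A G m (p ++ nb)| < η}) ∈ U := by
      refine (Filter.biInter_finset_mem _).mpr (fun p hp => ?_)
      exact (Filter.iInter_mem).mpr
        (fun m => PL_step hG hη m (hlp p (List.mem_toFinset.mp hp)))
    have hNmem : {n | N ≤ n} ∈ U := by
      apply hcof
      rw [Filter.mem_cofinite]
      have : {n : ℕ | N ≤ n}ᶜ ⊆ Set.Iio N := by
        intro n hn
        simp only [Set.mem_compl_iff, Set.mem_setOf_eq, not_le] at hn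
        exact hn
      exact Set.Finite.subset (Set.finite_Iio N) this
    obtain ⟨n, hn⟩ := Ultrafilter.nonempty_of_mem
      (Filter.inter_mem hNmem (Filter.inter_mem hS hT))
    obtain ⟨hnN, hnS, hnT⟩ := hn
    refine ⟨nb ++ [n], by simp [hlen], ?_, ?_, ?_⟩
    · intro x hx
      rcases List.mem_append.mp hx with hx | hx
      · exact hN x hx
      · rw [List.mem_singleton.mp hx]; exact hnN
    · intro m
      have hstep := Set.mem_iInter.mp hnS m
      simp only [Set.mem_setOf_eq] at hstep
      have := h1 m
      have harith : ((s : ℝ) + 1) * η = s * η + η := by ring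
      calc |PL U A G m (nb ++ [n]) - PL U A G m []|
          ≤ |PL U A G m (nb ++ [n]) - PL U A G m nb| + |PL U A G m nb - PL U A G m []| :=
            abs_sub_le _ _ _
        _ ≤ η + s * η := add_le_add (le_of_lt hstep) this
        _ ≤ (s + 1 : ℕ) * η := by push_cast; linarith
    · intro m p hp
      have hstep := Set.mem_iInter.mp (Set.mem_iInter₂.mp hnT p (List.mem_toFinset.mpr hp)) m
      simp only [Set.mem_setOf_eq] at hstep
      have := h2 m p hp
      rw [← List.append_assoc]
      calc |PL U A G m ((p ++ nb) ++ [n]) - PL U A G m p|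
          ≤ |PL U A G m ((p ++ nb) ++ [n]) - PL U A G m (p ++ nb)|
            + |PL U A G m (p ++ nb) - PL U A G m p| := abs_sub_le _ _ _
        _ ≤ η + s * η := add_le_add (le_of_lt hstep) this
        _ ≤ (s + 1 : ℕ) * η := by push_cast; linarith

end Kernel

section Blocks

variable {U : Ultrafilter ℕ} {A : ℕ} {G : Fin 6 → List ℕ → ℝ} {η : ℝ}

lemma kernel (hG : ∀ m l, G m l ∈ Set.Icc (0:ℝ) 1) (hη : 0 < η) (hA : 1 ≤ A)
    (hcof : (U : Filter ℕ) ≤ Filter.cofinite) :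
    ∃ b : ℕ → List ℕ, (∀ i, (b i).length = A) ∧ (∀ i, ∀ x ∈ b i, 2 ≤ x) ∧
      (∀ i, (b i).sum < (b (i+1)).sum) ∧
      (∀ (m : Fin 6) i j, i < j →
        |G m (b i ++ b j) - ulimN U (2 * A) (G m)| ≤ 2 * A * η) := by
  classical
  set P : List (List ℕ) → List ℕ → Prop := fun prev nb =>
    nb.length = A ∧ (∀ x ∈ nb, 2 + (prev.map List.sum).foldr max 0 ≤ x) ∧
    (∀ m, |PL U A G m nb - PL U A G m []| ≤ A * η) ∧
    (∀ m, ∀ p ∈ prev, |PL U A G m (p ++ nb) - PL U A G m p| ≤ A * η) with hP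
  have hpick : ∀ prev, (∀ p ∈ prev, p.length = A) → ∃ nb, P prev nb := by
    intro prev h
    obtain ⟨nb, h1, h2, h3, h4⟩ :=
      block_ext hG hη hA hcof prev h (2 + (prev.map List.sum).foldr max 0) A le_rfl
    exact ⟨nb, h1, h2, fun m => h3 m, fun m p hp => h4 m p hp⟩
  obtain ⟨pick, pickspec⟩ : ∃ pick : List (List ℕ) → List ℕ,
      ∀ prev, (∀ p ∈ prev, p.length = A) → P prev (pick prev) :=
    ⟨fun prev => if h : ∀ p ∈ prev, p.length = A then (hpick prev h).choose else [],
     fun prev h => by dsimp only; rw [dif_pos h]; exact (hpick prev h).choose_spec⟩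
  obtain ⟨bl, hbl0, hblS⟩ : ∃ bl : ℕ → List (List ℕ),
      bl 0 = [] ∧ ∀ i, bl (i+1) = bl i ++ [pick (bl i)] :=
    ⟨fun i => Nat.rec [] (fun _ acc => acc ++ [pick acc]) i, rfl, fun i => rfl⟩
  set b : ℕ → List ℕ := fun i => pick (bl i) with hb
  have hlen : ∀ i, ∀ p ∈ bl i, p.length = A := by
    intro i
    induction i with
    | zero => rw [hbl0]; intro p hp; simp at hp
    | succ i ih =>
      rw [hblS]
      intro p hp
      rcases List.mem_append.mp hp with hp | hp
      · exact ih p hp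
      · rw [List.mem_singleton.mp hp]
        exact (pickspec _ ih).1
  have hspec : ∀ i, P (bl i) (b i) := fun i => pickspec _ (hlen i)
  have hblen : ∀ i, (b i).length = A := fun i => (hspec i).1
  have hin : ∀ i j, i < j → b i ∈ bl j := by
    intro i j
    induction j with
    | zero => omega
    | succ j ih =>
      intro h
      rw [hblS]
      rcases Nat.lt_succ_iff_lt_or_eq.mp h with h | h
      · exact List.mem_append.mpr (Or.inl (ih h))
      · subst h; exact List.mem_append.mpr (Or.inr (by simp [hb]))
  have hge2 : ∀ i, ∀ x ∈ b i, 2 ≤ x := by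
    intro i x hx
    have := (hspec i).2.1 x hx
    omega
  refine ⟨b, hblen, hge2, ?_, ?_⟩
  · intro i
    have hne : b (i+1) ≠ [] := by
      intro hcon
      have := hblen (i+1)
      rw [hcon] at this
      simp at this
      omega
    obtain ⟨x, hx⟩ := List.exists_mem_of_ne_nil _ hne
    have hxsum : x ≤ (b (i+1)).sum := List.single_le_sum (fun y _ => Nat.zero_le y) x hx
    have hxbig := (hspec (i+1)).2.1 x hx
    have hmem : (b i).sum ∈ ((bl (i+1)).map List.sum) :=
      List.mem_map.mpr ⟨b i, hin i (i+1) (by omega), rfl⟩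
    have := le_foldr_max _ _ hmem
    omega
  · intro m i j hij
    have h1 : |PL U A G m (b i ++ b j) - PL U A G m (b i)| ≤ A * η :=
      (hspec j).2.2.2 m (b i) (hin i j hij)
    have h2 : |PL U A G m (b i) - PL U A G m []| ≤ A * η := (hspec i).2.2.1 m
    have hfull : (b i ++ b j).length = 2 * A := by
      rw [List.length_append, hblen i, hblen j]
      omega
    have e1 : G m (b i ++ b j) = PL U A G m (b i ++ b j) := (PL_full m hfull).symm
    have e2 : ulimN U (2 * A) (G m) = PL U A G m [] := (PL_nil m).symm
    rw [e1, e2]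
    have habs := abs_sub_le (PL U A G m (b i ++ b j)) (PL U A G m (b i)) (PL U A G m [])
    push_cast at h1 h2 ⊢
    linarith

end Blocks

/-! ### The dichotomy -/

lemma dichotomy (W : ℕ → ℝ) (hW : ∀ k, W k ∈ Set.Icc (0:ℝ) 1) (X Y : ℕ → ℝ)
    {ε' : ℝ} (hε' : 0 < ε') :
    ∃ (k : ℕ) (α : ℝ), 0 ≤ α ∧ α ≤ 1 ∧
      |α * α * W (k+1) + α * (1-α) * (X k + Y k) + (1-α) * (1-α) * W (k+2)
        - (α * W k + (1-α) * W (k+1))| ≤ ε' := by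
  set d : ℕ → ℝ := fun k => W (k+1) - W k with hd
  by_cases hcase : ∃ k, |d k| ≤ ε'
  · obtain ⟨k, hk⟩ := hcase
    refine ⟨k, 1, by norm_num, by norm_num, ?_⟩
    have he : (1:ℝ) * 1 * W (k+1) + 1 * (1-1) * (X k + Y k) + (1-1) * (1-1) * W (k+2)
        - (1 * W k + (1-1) * W (k+1)) = d k := by rw [hd]; ring
    rw [he]
    exact hk
  · push_neg at hcase
    have hpos : ∀ K : ℕ, ∃ k, K ≤ k ∧ ε' < d k := by
      intro K
      by_contra hcon
      push_neg at hcon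
      have hneg : ∀ j : ℕ, d (K + j) ≤ -ε' := by
        intro j
        have h1 := hcon (K + j) (Nat.le_add_right _ _)
        have h2 := hcase (K + j)
        rcases lt_abs.mp h2 with h3 | h3
        · linarith
        · linarith
      have hdesc : ∀ j : ℕ, W (K + j) ≤ W K - j * ε' := by
        intro j
        induction j with
        | zero => simp
        | succ j ih =>
          have h1 := hneg j
          have h2 : W (K + (j+1)) = W (K + j) + d (K + j) := by
            rw [hd]
            show W (K + (j+1)) = W (K+j) + (W (K+j+1) - W (K+j))
            rw [show K + (j+1) = K + j + 1 from by omega]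
            ring
          rw [h2]
          push_cast
          linarith
      obtain ⟨j, hj⟩ := exists_nat_gt (1 / ε')
      have h1 := hdesc j
      have h2 := (hW (K + j)).1
      have h3 := (hW K).2
      have h4 : 1 < (j : ℝ) * ε' := by
        have := mul_lt_mul_of_pos_right hj hε'
        rwa [div_mul_cancel₀ 1 (ne_of_gt hε')] at this
      linarith
    have hneg : ∀ K : ℕ, ∃ k, K ≤ k ∧ d k < -ε' := by
      intro K
      by_contra hcon
      push_neg at hcon
      have hup : ∀ j : ℕ, ε' < d (K + j) := by
        intro j
        have h1 := hcon (K + j) (Nat.le_add_right _ _)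
        have h2 := hcase (K + j)
        rcases lt_abs.mp h2 with h3 | h3
        · exact h3
        · linarith
      have hasc : ∀ j : ℕ, W K + j * ε' ≤ W (K + j) := by
        intro j
        induction j with
        | zero => simp
        | succ j ih =>
          have h1 := hup j
          have h2 : W (K + (j+1)) = W (K + j) + d (K + j) := by
            rw [hd]
            show W (K + (j+1)) = W (K+j) + (W (K+j+1) - W (K+j))
            rw [show K + (j+1) = K + j + 1 from by omega]
            ring
          rw [h2]
          push_cast
          linarith
      obtain ⟨j, hj⟩ := exists_nat_gt (1 / ε')
      have h1 := hasc j
      have h2 := (hW (K + j)).2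
      have h3 := (hW K).1
      have h4 : 1 < (j : ℝ) * ε' := by
        have := mul_lt_mul_of_pos_right hj hε'
        rwa [div_mul_cancel₀ 1 (ne_of_gt hε')] at this
      linarith
    obtain ⟨k₁, _, hk₁⟩ := hpos 0
    obtain ⟨k₂, hk₂ge, hk₂⟩ := hneg (k₁ + 1)
    have hQ : ∃ k, k₁ < k ∧ d k < -ε' := ⟨k₂, by omega, hk₂⟩
    set ks := Nat.find hQ with hks
    obtain ⟨hksgt, hksneg⟩ := Nat.find_spec hQ
    set K := ks - 1 with hK
    have hK1 : K + 1 = ks := by omega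
    have hKpos : ε' < d K := by
      by_cases hcs : K = k₁
      · rw [hcs]; exact hk₁
      · have hKgt : k₁ < K := by omega
        have hmin := Nat.find_min hQ (show K < ks from by omega)
        push_neg at hmin
        have h2 := hcase K
        have h4 := hmin hKgt
        rcases lt_abs.mp h2 with h3 | h3
        · exact h3
        · linarith
    have hKneg : d (K + 1) < -ε' := by rw [hK1]; exact hksneg
    -- intermediate value theorem
    set f : ℝ → ℝ := fun α => α * α * W (K+1) + α * (1-α) * (X K + Y K)
      + (1-α) * (1-α) * W (K+2) - (α * W K + (1-α) * W (K+1)) with hf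
    have hf0 : f 0 = d (K+1) := by rw [hf, hd]; ring_nf
    have hf1 : f 1 = d K := by rw [hf, hd]; ring_nf
    have hcont : ContinuousOn f (Set.Icc 0 1) := by
      apply Continuous.continuousOn
      fun_prop
    have h0mem : (0:ℝ) ∈ Set.Icc (f 0) (f 1) := by
      rw [hf0, hf1]
      constructor <;> [linarith; linarith]
    obtain ⟨α, hαmem, hfα⟩ := intermediate_value_Icc (by norm_num : (0:ℝ) ≤ 1) hcont h0mem
    refine ⟨K, α, hαmem.1, hαmem.2, ?_⟩
    have : α * α * W (K+1) + α * (1-α) * (X K + Y K)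
      + (1-α) * (1-α) * W (K+2) - (α * W K + (1-α) * W (K+1)) = f α := rfl
    rw [this, hfα]
    simpa using le_of_lt hε'

/-! ### Two-point measures -/

noncomputable def mix (α : ℝ) (t₁ t₂ : 𝕋) : Bdd 𝕋 → ℝ :=
  fun f => α * f.1 t₁ + (1 - α) * f.1 t₂

lemma liftBdd_fst {S : Type*} {g : S → ℝ} (hg : ∃ M, ∀ s, |g s| ≤ M) :
    (liftBdd g).1 = g := by
  unfold liftBdd; simp [hg]

lemma mix_mem_Asets {α : ℝ} (h0 : 0 ≤ α) (h1 : α ≤ 1) {t₁ t₂ : 𝕋} {n : ℕ}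
    (hc1 : cnt t₁ = n) (hc2 : cnt t₂ = n) : mix α t₁ t₂ ∈ Asets n := by
  by_cases heq : t₂ = t₁
  · refine ⟨{t₁}, fun _ => 1, ?_, ?_, ?_, ?_⟩
    · intro t ht; rw [Finset.mem_singleton.mp ht]; exact hc1
    · intro t _; norm_num
    · simp
    · intro f
      rw [Finset.sum_singleton]
      show α * f.1 t₁ + (1 - α) * f.1 t₂ = 1 * f.1 t₁
      rw [heq]; ring
  · refine ⟨{t₁, t₂}, fun t => if t = t₁ then α else 1 - α, ?_, ?_, ?_, ?_⟩
    · intro t ht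
      rcases Finset.mem_insert.mp ht with rfl | ht
      · exact hc1
      · rw [Finset.mem_singleton.mp ht]; exact hc2
    · intro t _
      by_cases h : t = t₁
      · simp only [if_pos h]; exact h0
      · simp only [if_neg h]; linarith
    · rw [Finset.sum_pair (fun h => heq h.symm)]
      show (if t₁ = t₁ then α else 1 - α) + (if t₂ = t₁ then α else 1 - α) = 1
      rw [if_pos (rfl : t₁ = t₁), if_neg heq]
      ring
    · intro f
      rw [Finset.sum_pair (fun h => heq h.symm)]
      show mix α t₁ t₂ f
        = (if t₁ = t₁ then α else 1 - α) * f.1 t₁ + (if t₂ = t₁ then α else 1 - α) * f.1 t₂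
      rw [if_pos (rfl : t₁ = t₁), if_neg heq]
      rfl

lemma mix_eval {α : ℝ} {t₁ t₂ : 𝕋} {g : 𝕋 → ℝ} (hg : ∃ M, ∀ s, |g s| ≤ M) :
    mix α t₁ t₂ (liftBdd g) = α * g t₁ + (1 - α) * g t₂ := by
  show α * (liftBdd g).1 t₁ + (1 - α) * (liftBdd g).1 t₂ = _
  rw [liftBdd_fst hg]

lemma hmul_mix_eval {c : 𝕋 → ℝ} (hc : ∀ t, |c t| ≤ 1) {α β : ℝ}
    (hβ0 : 0 ≤ β) (hβ1 : β ≤ 1) (a₁ a₂ b₁ b₂ : 𝕋) :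
    hmul (mix α a₁ a₂) (mix β b₁ b₂) (liftBdd c) =
      α * (β * c (a₁ * b₁) + (1 - β) * c (a₁ * b₂))
      + (1 - α) * (β * c (a₂ * b₁) + (1 - β) * c (a₂ * b₂)) := by
  have hcb : ∃ M, ∀ s, |c s| ≤ M := ⟨1, hc⟩
  show mix α a₁ a₂ (liftBdd fun x => mix β b₁ b₂ (liftBdd fun y => (liftBdd c).1 (x * y))) = _
  have hin : ∀ x : 𝕋, (mix β b₁ b₂ (liftBdd fun y => (liftBdd c).1 (x * y)))
      = β * c (x * b₁) + (1 - β) * c (x * b₂) := by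
    intro x
    rw [liftBdd_fst hcb]
    show β * (liftBdd fun y => c (x * y)).1 b₁ + (1 - β) * (liftBdd fun y => c (x * y)).1 b₂ = _
    rw [liftBdd_fst ⟨1, fun y => hc _⟩]
  have hout : (fun x => mix β b₁ b₂ (liftBdd fun y => (liftBdd c).1 (x * y)))
      = fun x => β * c (x * b₁) + (1 - β) * c (x * b₂) := funext hin
  rw [hout]
  have hbound : ∀ x : 𝕋, |β * c (x * b₁) + (1 - β) * c (x * b₂)| ≤ 1 := by
    intro x
    have h1 := hc (x * b₁)
    have h2 := hc (x * b₂)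
    have habs := abs_add_le (β * c (x * b₁)) ((1 - β) * c (x * b₂))
    rw [abs_mul, abs_mul, abs_of_nonneg hβ0, abs_of_nonneg (by linarith : (0:ℝ) ≤ 1 - β)] at habs
    nlinarith [mul_le_mul_of_nonneg_left h1 hβ0,
      mul_le_mul_of_nonneg_left h2 (by linarith : (0:ℝ) ≤ 1 - β)]
  show α * (liftBdd fun x => β * c (x * b₁) + (1 - β) * c (x * b₂)).1 a₁
      + (1 - α) * (liftBdd fun x => β * c (x * b₁) + (1 - β) * c (x * b₂)).1 a₂ = _
  rw [liftBdd_fst ⟨1, hbound⟩]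

lemma convex2 {v₁ v₂ w₁ w₂ e α : ℝ} (hα : 0 ≤ α) (hα1 : α ≤ 1)
    (h1 : |v₁ - w₁| ≤ e) (h2 : |v₂ - w₂| ≤ e) :
    |α * v₁ + (1 - α) * v₂ - (α * w₁ + (1 - α) * w₂)| ≤ e := by
  obtain ⟨h1a, h1b⟩ := abs_le.mp h1
  obtain ⟨h2a, h2b⟩ := abs_le.mp h2
  rw [abs_le]
  constructor
  · nlinarith
  · nlinarith

/-! ### The six tracked functions and their iterated limits -/

noncomputable def Gfun (c : 𝕋 → ℝ) (k A : ℕ) : Fin 6 → List ℕ → ℝ := fun m l =>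
  match m with
  | 0 => c (bal k (ps (l.take A)))
  | 1 => c (bal (k+1) (l.take A))
  | 2 => c (bal k (ps (l.take A)) * bal k (ps (l.drop A)))
  | 3 => c (bal k (ps (l.take A)) * bal (k+1) (l.drop A))
  | 4 => c (bal (k+1) (l.take A) * bal k (ps (l.drop A)))
  | 5 => c (bal (k+1) (l.take A) * bal (k+1) (l.drop A))

section Targets

variable {U : Ultrafilter ℕ} {c : 𝕋 → ℝ} {k : ℕ}

lemma pow_split (k : ℕ) : (2:ℕ)^(k+1) = 2 * 2^k := by rw [pow_succ]; ring

lemma ps_take_drop {l : List ℕ} {k : ℕ} (hl : l.length = 2 * 2^(k+1)) :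
    ps (l.take (2^(k+1))) = (ps l).take (2^k) ∧ ps (l.drop (2^(k+1))) = (ps l).drop (2^k) := by
  have hlt : (l.take (2^(k+1))).length = 2^(k+1) := by
    rw [List.length_take, hl]
    exact Nat.min_eq_left (by omega)
  have heven : Even (l.take (2^(k+1))).length := by
    rw [hlt, pow_split]
    exact ⟨2^k, by ring⟩
  have hdecomp : ps l = ps (l.take (2^(k+1))) ++ ps (l.drop (2^(k+1))) := by
    conv_lhs => rw [← List.take_append_drop (2^(k+1)) l]
    exact ps_append _ _ heven
  have hplen : (ps (l.take (2^(k+1)))).length = 2^k := by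
    rw [ps_length, hlt, pow_split]
    omega
  constructor
  · rw [hdecomp, List.take_left' hplen]
  · rw [hdecomp, List.drop_left' hplen]

lemma target0 (idem : ∀ S ∈ U, {n | {m | n + m ∈ S} ∈ U} ∈ U)
    (hc : ∀ t, c t ∈ Set.Icc (0:ℝ) 1) :
    ulimN U (2 * 2^(k+1)) (Gfun c k (2^(k+1)) 0) = ulimN U (2^k) (fun l => c (bal k l)) := by
  have h1 : ulimN U (2 * 2^(k+1)) (Gfun c k (2^(k+1)) 0)
      = ulimN U (2^(k+1) + 2^(k+1)) (fun l => (fun l' => c (bal k (ps l'))) (l.take (2^(k+1)))) := by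
    rw [two_mul]
    rfl
  rw [h1, ulimN_pad (2^(k+1)) (2^(k+1)) (fun l' => c (bal k (ps l'))) (fun l => hc _)]
  rw [pow_split]
  exact E1 idem (2^k) _ (fun l => hc _)

lemma target1 (hc : ∀ t, c t ∈ Set.Icc (0:ℝ) 1) :
    ulimN U (2 * 2^(k+1)) (Gfun c k (2^(k+1)) 1)
      = ulimN U (2^(k+1)) (fun l => c (bal (k+1) l)) := by
  have h1 : ulimN U (2 * 2^(k+1)) (Gfun c k (2^(k+1)) 1)
      = ulimN U (2^(k+1) + 2^(k+1)) (fun l => (fun l' => c (bal (k+1) l')) (l.take (2^(k+1)))) := by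
    rw [two_mul]
    rfl
  rw [h1, ulimN_pad (2^(k+1)) (2^(k+1)) (fun l' => c (bal (k+1) l')) (fun l => hc _)]

lemma target2 (idem : ∀ S ∈ U, {n | {m | n + m ∈ S} ∈ U} ∈ U)
    (hc : ∀ t, c t ∈ Set.Icc (0:ℝ) 1) :
    ulimN U (2 * 2^(k+1)) (Gfun c k (2^(k+1)) 2)
      = ulimN U (2^(k+1)) (fun l => c (bal (k+1) l)) := by
  have hcong : ∀ l : List ℕ, l.length = 2 * 2^(k+1) →
      Gfun c k (2^(k+1)) 2 l = c (bal (k+1) (ps l)) := by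
    intro l hl
    obtain ⟨h1, h2⟩ := ps_take_drop hl
    show c (bal k (ps (l.take (2^(k+1)))) * bal k (ps (l.drop (2^(k+1))))) = c (bal (k+1) (ps l))
    rw [bal_succ, h1, h2]
  exact (ulimN_congr _ _ _ hcong).trans (E1 idem (2^(k+1)) _ (fun l => hc _))

lemma target5 :
    ulimN U (2 * 2^(k+1)) (Gfun c k (2^(k+1)) 5)
      = ulimN U (2^(k+2)) (fun l => c (bal (k+2) l)) := by
  have hcong : ∀ l : List ℕ, l.length = 2 * 2^(k+1) →
      Gfun c k (2^(k+1)) 5 l = c (bal (k+2) l) := by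
    intro l _
    rfl
  rw [ulimN_congr _ _ _ hcong, show (2:ℕ)^(k+2) = 2 * 2^(k+1) from by rw [pow_succ]; ring]

end Targets
end HFP

open HFP in
/-- Theorem 1.2: for every `c : 𝕋 → [0,1]` and `ε > 0`, there are
`r ∈ [0,1]` and an increasing sequence `(μ_i)` in `𝔸` with `|c(μ_i) - r| < ε`
for all `i` and `|c(μ_iˆμ_j) - r| < ε` for all `i < j`. -/
theorem hindman_for_pairs (c : 𝕋 → ℝ) (hc : ∀ t, c t ∈ Set.Icc (0 : ℝ) 1)
    (ε : ℝ) (hε : 0 < ε) :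
    ∃ r ∈ Set.Icc (0 : ℝ) 1, ∃ (μ : ℕ → (Bdd 𝕋 → ℝ)) (ns : ℕ → ℕ),
      StrictMono ns ∧ (∀ i, μ i ∈ Asets (ns i)) ∧
      (∀ i, |μ i (liftBdd c) - r| < ε) ∧
      (∀ i j, i < j → |hmul (μ i) (μ j) (liftBdd c) - r| < ε) := by
  classical
  obtain ⟨U, idem, hcof⟩ := exists_good_ultrafilter
  have hc1 : ∀ t, |c t| ≤ 1 := fun t => abs_le.mpr ⟨by linarith [(hc t).1], (hc t).2⟩
  -- the dichotomy applied to the iterated-limit values of balanced shapes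
  obtain ⟨k, α, hα0, hα1, hS⟩ := dichotomy
    (fun k => ulimN U (2^k) (fun l => c (bal k l)))
    (fun k => ulimN_mem_Icc _ _ (fun l => hc _))
    (fun k => ulimN U (2 * 2^(k+1)) (Gfun c k (2^(k+1)) 3))
    (fun k => ulimN U (2 * 2^(k+1)) (Gfun c k (2^(k+1)) 4))
    (show (0:ℝ) < ε/2 by linarith)
  set Wk : ℝ := ulimN U (2^k) (fun l => c (bal k l)) with hWk
  set Wk1 : ℝ := ulimN U (2^(k+1)) (fun l => c (bal (k+1) l)) with hWk1
  set Wk2 : ℝ := ulimN U (2^(k+2)) (fun l => c (bal (k+2) l)) with hWk2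
  set Xv : ℝ := ulimN U (2 * 2^(k+1)) (Gfun c k (2^(k+1)) 3) with hXv
  set Yv : ℝ := ulimN U (2 * 2^(k+1)) (Gfun c k (2^(k+1)) 4) with hYv
  have hWkb : Wk ∈ Set.Icc (0:ℝ) 1 := ulimN_mem_Icc _ _ (fun l => hc _)
  have hWk1b : Wk1 ∈ Set.Icc (0:ℝ) 1 := ulimN_mem_Icc _ _ (fun l => hc _)
  -- the kernel extraction
  have hGb : ∀ (m : Fin 6) (l : List ℕ), Gfun c k (2^(k+1)) m l ∈ Set.Icc (0:ℝ) 1 := by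
    intro m l
    fin_cases m <;> exact hc _
  have hA1 : 1 ≤ 2^(k+1) := Nat.one_le_two_pow
  set A : ℕ := 2^(k+1) with hA
  set η : ℝ := ε / (8 * (A : ℝ) + 8) with hη
  have hηpos : (0:ℝ) < η := by rw [hη]; positivity
  obtain ⟨b, hblen, hb2, hbsum, hbpair⟩ := kernel (U := U) hGb hηpos hA1 hcof
  have h2Aη : 2 * (A:ℝ) * η ≤ ε / 4 := by
    have hpos : (0:ℝ) < 8 * (A:ℝ) + 8 := by positivity
    have e : 2 * (A:ℝ) * (ε / (8*(A:ℝ)+8)) = (2*(A:ℝ)*ε) / (8*(A:ℝ)+8) := by ring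
    rw [hη, e, div_le_div_iff₀ hpos (by norm_num : (0:ℝ) < 4)]
    nlinarith [hε, Nat.cast_nonneg (α := ℝ) A]
  -- the trees
  set t1 : ℕ → 𝕋 := fun i => bal k (ps (b i)) with ht1
  set t2 : ℕ → 𝕋 := fun i => bal (k+1) (b i) with ht2
  -- counting
  have hcnt : ∀ i, cnt (t1 i) = (b i).sum ∧ cnt (t2 i) = (b i).sum := by
    intro i
    have hlen := hblen i
    have hent : ∀ x ∈ b i, 1 ≤ x := fun x hx => le_trans (by norm_num) (hb2 i x hx)
    have heven : Even (b i).length := by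
      rw [hlen, hA, pow_split]
      exact ⟨2^k, by ring⟩
    constructor
    · rw [ht1]
      have hpl : (ps (b i)).length = 2^k := by
        rw [ps_length, hlen, hA, pow_split]
        omega
      rw [cnt_bal k _ hpl (ps_mem _ hent), ps_sum _ heven]
    · rw [ht2]
      exact cnt_bal (k+1) _ (by rw [hlen, hA]) hent
  -- values from the kernel
  have hval : ∀ (m : Fin 6) i j, i < j →
      |Gfun c k A m (b i ++ b j) - ulimN U (2 * A) (Gfun c k A m)| ≤ 2 * (A:ℝ) * η :=
    fun m i j hij => hbpair m i j hij
  have htake : ∀ i j, (b i ++ b j).take A = b i := fun i j => List.take_left' (hblen i)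
  have hdrop : ∀ i j, (b i ++ b j).drop A = b j := fun i j => List.drop_left' (hblen i)
  have hv1 : ∀ i, |c (t1 i) - Wk| ≤ 2 * (A:ℝ) * η := by
    intro i
    have h := hval 0 i (i+1) (by omega)
    rw [target0 idem hc] at h
    have he : Gfun c k A 0 (b i ++ b (i+1)) = c (t1 i) := by
      show c (bal k (ps ((b i ++ b (i+1)).take A))) = c (t1 i)
      rw [htake]
    rw [he] at h
    exact h
  have hv2 : ∀ i, |c (t2 i) - Wk1| ≤ 2 * (A:ℝ) * η := by
    intro i
    have h := hval 1 i (i+1) (by omega)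
    rw [target1 hc] at h
    have he : Gfun c k A 1 (b i ++ b (i+1)) = c (t2 i) := by
      show c (bal (k+1) ((b i ++ b (i+1)).take A)) = c (t2 i)
      rw [htake]
    rw [he] at h
    exact h
  -- the common value r
  set r : ℝ := α * Wk + (1 - α) * Wk1 with hr
  have hrIcc : r ∈ Set.Icc (0:ℝ) 1 := by
    obtain ⟨w1, w2⟩ := hWkb
    obtain ⟨w3, w4⟩ := hWk1b
    constructor
    · nlinarith
    · nlinarith
  refine ⟨r, hrIcc, fun i => mix α (t1 i) (t2 i), fun i => (b i).sum, ?_, ?_, ?_, ?_⟩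
  · exact strictMono_nat_of_lt_succ hbsum
  · intro i
    exact mix_mem_Asets hα0 hα1 (hcnt i).1 (hcnt i).2
  · intro i
    show |mix α (t1 i) (t2 i) (liftBdd c) - r| < ε
    rw [mix_eval ⟨1, hc1⟩]
    have := convex2 hα0 hα1 (hv1 i) (hv2 i)
    calc |α * c (t1 i) + (1 - α) * c (t2 i) - r| ≤ 2 * (A:ℝ) * η := this
      _ ≤ ε / 4 := h2Aη
      _ < ε := by linarith
  · intro i j hij
    show |hmul (mix α (t1 i) (t2 i)) (mix α (t1 j) (t2 j)) (liftBdd c) - r| < ε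
    rw [hmul_mix_eval hc1 hα0 hα1]
    -- the four product values
    have hp11 : |c (t1 i * t1 j) - Wk1| ≤ 2 * (A:ℝ) * η := by
      have h := hval 2 i j hij
      rw [target2 idem hc] at h
      have he : Gfun c k A 2 (b i ++ b j) = c (t1 i * t1 j) := by
        show c (bal k (ps ((b i ++ b j).take A)) * bal k (ps ((b i ++ b j).drop A)))
          = c (t1 i * t1 j)
        rw [htake, hdrop]
      rw [he] at h
      exact h
    have hp12 : |c (t1 i * t2 j) - Xv| ≤ 2 * (A:ℝ) * η := by
      have h := hval 3 i j hij
      have he : Gfun c k A 3 (b i ++ b j) = c (t1 i * t2 j) := by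
        show c (bal k (ps ((b i ++ b j).take A)) * bal (k+1) ((b i ++ b j).drop A))
          = c (t1 i * t2 j)
        rw [htake, hdrop]
      rw [he] at h
      exact h
    have hp21 : |c (t2 i * t1 j) - Yv| ≤ 2 * (A:ℝ) * η := by
      have h := hval 4 i j hij
      have he : Gfun c k A 4 (b i ++ b j) = c (t2 i * t1 j) := by
        show c (bal (k+1) ((b i ++ b j).take A) * bal k (ps ((b i ++ b j).drop A)))
          = c (t2 i * t1 j)
        rw [htake, hdrop]
      rw [he] at h
      exact h
    have hp22 : |c (t2 i * t2 j) - Wk2| ≤ 2 * (A:ℝ) * η := by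
      have h := hval 5 i j hij
      rw [target5] at h
      have he : Gfun c k A 5 (b i ++ b j) = c (t2 i * t2 j) := by
        show c (bal (k+1) ((b i ++ b j).take A) * bal (k+1) ((b i ++ b j).drop A))
          = c (t2 i * t2 j)
        rw [htake, hdrop]
      rw [he] at h
      exact h
    have hin1 := convex2 hα0 hα1 hp11 hp12
    have hin2 := convex2 hα0 hα1 hp21 hp22
    have houter := convex2 hα0 hα1 hin1 hin2
    have hPr : |(α * (α * Wk1 + (1 - α) * Xv) + (1 - α) * (α * Yv + (1 - α) * Wk2)) - r| ≤ ε/2 := by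
      have hre : α * (α * Wk1 + (1 - α) * Xv) + (1 - α) * (α * Yv + (1 - α) * Wk2) - r
          = α * α * Wk1 + α * (1 - α) * (Xv + Yv) + (1 - α) * (1 - α) * Wk2
            - (α * Wk + (1 - α) * Wk1) := by
        rw [hr]; ring
      rw [hre]
      exact hS
    have habs := abs_sub_le
      (α * (α * c (t1 i * t1 j) + (1 - α) * c (t1 i * t2 j))
        + (1 - α) * (α * c (t2 i * t1 j) + (1 - α) * c (t2 i * t2 j)))
      (α * (α * Wk1 + (1 - α) * Xv) + (1 - α) * (α * Yv + (1 - α) * Wk2)) r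
    calc |α * (α * c (t1 i * t1 j) + (1 - α) * c (t1 i * t2 j))
        + (1 - α) * (α * c (t2 i * t1 j) + (1 - α) * c (t2 i * t2 j)) - r|
        ≤ 2 * (A:ℝ) * η + ε/2 := by linarith [houter, hPr, habs]
      _ ≤ ε / 4 + ε / 2 := by linarith [h2Aη]
      _ < ε := by linarith
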